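/- Let F be a field and J an infinite set. The trace form κ on sl_J(F), defined by κ(f, g) = tr(f ∘ g) (note that f ∘ g is finitary whenever f and g are), is a symmetric bilinear form that is invariant, i.e. κ([h, f], g) + κ(f, [h, g]) = 0 for all f, g, h ∈ sl_J(F), and nondegenerate, i.e. if f ∈ sl_J(F) satisfies κ(f, g) = 0 for all g ∈ sl_J(F), then f = 0. -/

import Mathlib

set_option maxHeartbeats 1000000
set_option synthInstance.maxHeartbeats 1000000

attribute [local instance 100] LieRing.ofAssociativeRing

/-- An `F`-linear endomorphism `f` of `ι →₀ F` is *finitary* if the set of pairs `(i, j)`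
with `(f eⱼ) i ≠ 0` (where `eⱼ = single j 1` are the standard basis vectors) is finite. -/
def Finitary (F : Type*) [Field F] {ι : Type*} (f : Module.End F (ι →₀ F)) : Prop :=
  {p : ι × ι | f (Finsupp.single p.2 1) p.1 ≠ 0}.Finite

/-- The trace of a (finitary) endomorphism of `ι →₀ F`. -/
noncomputable def trF (F : Type*) [Field F] {ι : Type*} (f : Module.End F (ι →₀ F)) : F :=
  ∑ᶠ j, f (Finsupp.single j 1) j

section SL

variable {F : Type*} [Field F] {ι : Type*}

lemma end_apply_eq_sum (f : Module.End F (ι →₀ F)) (v : ι →₀ F) :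
    f v = ∑ i ∈ v.support, v i • f (Finsupp.single i 1) := by
  conv_lhs => rw [← Finsupp.sum_single v, Finsupp.sum, map_sum]
  exact Finset.sum_congr rfl fun i _ => by rw [← Finsupp.smul_single_one, map_smul]

lemma column_eq_zero {f : Module.End F (ι →₀ F)} {j : ι}
    (h : ∀ i, f (Finsupp.single j 1) i = 0) : f (Finsupp.single j 1) = 0 := by
  ext i; simpa using h i

namespace Finitary

variable {f g : Module.End F (ι →₀ F)}

lemma add (hf : Finitary F f) (hg : Finitary F g) : Finitary F (f + g) := by
  refine (hf.union hg).subset fun p hp => ?_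
  by_contra h
  simp only [Set.mem_union, Set.mem_setOf_eq, not_or, not_not] at h
  exact hp (by simp [LinearMap.add_apply, Finsupp.add_apply, h.1, h.2])

lemma zero : Finitary F (0 : Module.End F (ι →₀ F)) := by
  have h : {p : ι × ι | (0 : Module.End F (ι →₀ F)) (Finsupp.single p.2 1) p.1 ≠ 0} = ∅ := by
    ext p; simp
  unfold Finitary
  rw [h]
  exact Set.finite_empty

lemma smul (c : F) (hf : Finitary F f) : Finitary F (c • f) := by
  refine hf.subset fun p hp => ?_
  simp only [Set.mem_setOf_eq, LinearMap.smul_apply, Finsupp.smul_apply] at hp ⊢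
  intro h
  exact hp (by simp [h])

lemma neg (hf : Finitary F f) : Finitary F (-f) := by
  refine hf.subset fun p hp => ?_
  simp only [Set.mem_setOf_eq, LinearMap.neg_apply, Finsupp.neg_apply, neg_ne_zero] at hp ⊢
  exact hp

lemma sub (hf : Finitary F f) (hg : Finitary F g) : Finitary F (f - g) := by
  have h : f - g = f + -g := sub_eq_add_neg f g
  rw [h]
  exact hf.add hg.neg

lemma mul (hf : Finitary F f) (hg : Finitary F g) : Finitary F (f * g) := by
  refine ((hf.image Prod.fst).prod (hg.image Prod.snd)).subset ?_
  rintro ⟨k, l⟩ hkl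
  simp only [Set.mem_setOf_eq, Module.End.mul_apply] at hkl
  constructor
  · -- k ∈ Prod.fst '' S_f
    by_contra hk
    apply hkl
    rw [end_apply_eq_sum f (g (Finsupp.single l 1)), Finset.sum_apply']
    refine Finset.sum_eq_zero fun i _ => ?_
    have : f (Finsupp.single i 1) k = 0 := by
      by_contra h
      exact hk ⟨(k, i), h, rfl⟩
    simp [this]
  · -- l ∈ Prod.snd '' S_g
    by_contra hl
    apply hkl
    have : g (Finsupp.single l 1) = 0 := by
      refine column_eq_zero fun i => ?_
      by_contra h
      exact hl ⟨(i, l), h, rfl⟩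
    rw [this, map_zero]
    simp

end Finitary

lemma trace_support_finite {f : Module.End F (ι →₀ F)} (hf : Finitary F f) :
    (Function.support fun j => f (Finsupp.single j 1) j).Finite :=
  (hf.image Prod.fst).subset fun j hj => ⟨(j, j), hj, rfl⟩

lemma trF_add {f g : Module.End F (ι →₀ F)} (hf : Finitary F f) (hg : Finitary F g) :
    trF F (f + g) = trF F f + trF F g := by
  unfold trF
  rw [← finsum_add_distrib (trace_support_finite hf) (trace_support_finite hg)]
  simp [LinearMap.add_apply]

lemma trF_zero : trF F (0 : Module.End F (ι →₀ F)) = 0 := by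
  unfold trF; simp

lemma trF_neg (f : Module.End F (ι →₀ F)) : trF F (-f) = -trF F f := by
  unfold trF
  rw [← finsum_neg_distrib]
  simp

lemma trF_sub {f g : Module.End F (ι →₀ F)} (hf : Finitary F f) (hg : Finitary F g) :
    trF F (f - g) = trF F f - trF F g := by
  have h2 : f - g = f + -g := sub_eq_add_neg f g
  have h := trF_add hf hg.neg
  rw [trF_neg] at h
  rw [h2, h, sub_eq_add_neg]

lemma trF_smul (c : F) (f : Module.End F (ι →₀ F)) : trF F (c • f) = c * trF F f := by
  unfold trF
  rcases (Function.support fun j => f (Finsupp.single j 1) j).finite_or_infinite with h | h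
  · rw [mul_finsum' _ _ h]; simp
  · by_cases hc : c = 0
    · simp [hc]
    · have h2 : (Function.support fun j => (c • f) (Finsupp.single j 1) j).Infinite := by
        refine h.mono fun j hj => ?_
        simp only [Function.mem_support, LinearMap.smul_apply, Finsupp.smul_apply,
          smul_eq_mul] at hj ⊢
        exact mul_ne_zero hc hj
      rw [finsum_of_infinite_support h, finsum_of_infinite_support h2, mul_zero]

end SL

section SL2

variable {F : Type*} [Field F] {ι : Type*}

lemma entry_formula {g : Module.End F (ι →₀ F)}
    (f : Module.End F (ι →₀ F)) (T : Finset ι)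
    (hT : ∀ p : ι × ι, g (Finsupp.single p.2 1) p.1 ≠ 0 → p.1 ∈ T)
    (j k : ι) :
    (f * g) (Finsupp.single j 1) k = ∑ i ∈ T, g (Finsupp.single j 1) i * f (Finsupp.single i 1) k := by
  classical
  rw [Module.End.mul_apply, end_apply_eq_sum f (g (Finsupp.single j 1)), Finset.sum_apply']
  rw [Finset.sum_subset (fun i hi => hT (i, j) (Finsupp.mem_support_iff.mp hi))]
  · exact Finset.sum_congr rfl fun i _ => by simp [smul_eq_mul]
  · intro i _ hi
    rw [Finsupp.notMem_support_iff.mp hi]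
    simp

lemma trF_mul_comm {f g : Module.End F (ι →₀ F)} (hf : Finitary F f) (hg : Finitary F g) :
    trF F (f * g) = trF F (g * f) := by
  classical
  obtain ⟨T, hfT, hgT⟩ :
      ∃ T : Finset ι,
        (∀ p : ι × ι, f (Finsupp.single p.2 1) p.1 ≠ 0 → p.1 ∈ T ∧ p.2 ∈ T) ∧
        (∀ p : ι × ι, g (Finsupp.single p.2 1) p.1 ≠ 0 → p.1 ∈ T ∧ p.2 ∈ T) := by
    refine ⟨(hf.toFinset ∪ hg.toFinset).biUnion fun p => {p.1, p.2}, fun p hp => ?_, fun p hp => ?_⟩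
    · have hmem : p ∈ hf.toFinset ∪ hg.toFinset :=
        Finset.mem_union_left _ (hf.mem_toFinset.mpr hp)
      exact ⟨Finset.mem_biUnion.mpr ⟨p, hmem, by simp⟩, Finset.mem_biUnion.mpr ⟨p, hmem, by simp⟩⟩
    · have hmem : p ∈ hf.toFinset ∪ hg.toFinset :=
        Finset.mem_union_right _ (hg.mem_toFinset.mpr hp)
      exact ⟨Finset.mem_biUnion.mpr ⟨p, hmem, by simp⟩, Finset.mem_biUnion.mpr ⟨p, hmem, by simp⟩⟩
  -- columns outside T vanish
  have hgcol : ∀ j, j ∉ T → g (Finsupp.single j 1) = 0 := fun j hj =>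
    column_eq_zero fun i => by
      by_contra h
      exact hj ((hgT (i, j) h).2)
  have hfcol : ∀ j, j ∉ T → f (Finsupp.single j 1) = 0 := fun j hj =>
    column_eq_zero fun i => by
      by_contra h
      exact hj ((hfT (i, j) h).2)
  have hsupfg : (Function.support fun j => (f * g) (Finsupp.single j 1) j) ⊆ (T : Set ι) := by
    intro j hj
    by_contra hjT
    apply hj
    simp [Module.End.mul_apply, hgcol j hjT]
  have hsupgf : (Function.support fun j => (g * f) (Finsupp.single j 1) j) ⊆ (T : Set ι) := by
    intro j hj
    by_contra hjT
    apply hj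
    simp [Module.End.mul_apply, hfcol j hjT]
  rw [trF, trF, finsum_eq_finset_sum_of_support_subset _ hsupfg,
    finsum_eq_finset_sum_of_support_subset _ hsupgf]
  calc ∑ j ∈ T, (f * g) (Finsupp.single j 1) j
      = ∑ j ∈ T, ∑ i ∈ T, g (Finsupp.single j 1) i * f (Finsupp.single i 1) j :=
        Finset.sum_congr rfl fun j _ => entry_formula f T (fun p hp => (hgT p hp).1) j j
    _ = ∑ i ∈ T, ∑ j ∈ T, g (Finsupp.single j 1) i * f (Finsupp.single i 1) j := Finset.sum_comm
    _ = ∑ i ∈ T, ∑ j ∈ T, f (Finsupp.single i 1) j * g (Finsupp.single j 1) i :=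
        Finset.sum_congr rfl fun i _ => Finset.sum_congr rfl fun j _ => mul_comm _ _
    _ = ∑ i ∈ T, (g * f) (Finsupp.single i 1) i :=
        Finset.sum_congr rfl fun i _ => (entry_formula g T (fun p hp => (hfT p hp).1) i i).symm

/-- The Lie algebra `sl_J(F)` of finitary trace-zero endomorphisms of `J →₀ F`. -/
def slJ (F : Type*) [Field F] (J : Type*) : LieSubalgebra F (Module.End F (J →₀ F)) where
  carrier := {f | Finitary F f ∧ trF F f = 0}
  add_mem' := fun {a b} ha hb => ⟨ha.1.add hb.1, by rw [trF_add ha.1 hb.1, ha.2, hb.2, add_zero]⟩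
  zero_mem' := ⟨Finitary.zero, trF_zero⟩
  smul_mem' := fun c x hx => ⟨hx.1.smul c, by rw [trF_smul, hx.2, mul_zero]⟩
  lie_mem' := fun {x y} hx hy => by
    have hxy : ⁅x, y⁆ = x * y - y * x := Ring.lie_def x y
    refine ⟨?_, ?_⟩
    · rw [Set.mem_setOf_eq] at *
      rw [hxy]
      exact (hx.1.mul hy.1).sub (hy.1.mul hx.1)
    · rw [hxy, trF_sub (hx.1.mul hy.1) (hy.1.mul hx.1), trF_mul_comm hx.1 hy.1, sub_self]

end SL2

/-- The trace form `κ (f, g) = tr (f ∘ g)` on `sl_J(F)`. -/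
noncomputable def kappa (F : Type*) [Field F] (J : Type*) (f g : slJ F J) : F :=
  trF F ((f : Module.End F (J →₀ F)) * (g : Module.End F (J →₀ F)))

section Aux

variable {F : Type*} [Field F] {ι : Type*}

/-- The matrix unit sending `e_i` to `e_j`. -/
noncomputable def Eij (F : Type*) [Field F] {ι : Type*} (j i : ι) :
    Module.End F (ι →₀ F) :=
  (Finsupp.lsingle j) ∘ₗ (Finsupp.lapply i)

lemma Eij_apply_single (j i l : ι) :
    Eij F j i (Finsupp.single l 1) = Finsupp.single j ((Finsupp.single l (1 : F)) i) := rfl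

lemma finitary_Eij (j i : ι) : Finitary F (Eij F j i) := by
  refine (Set.finite_singleton ((j, i) : ι × ι)).subset fun p hp => ?_
  simp only [Set.mem_setOf_eq, Eij_apply_single] at hp
  by_contra h
  apply hp
  rcases ne_or_eq p.2 i with h2 | h2
  · rw [Finsupp.single_eq_of_ne' h2]; simp
  · have h1 : p.1 ≠ j := fun h1 => h (Prod.ext_iff.mpr ⟨h1, h2⟩)
    rw [h2, Finsupp.single_eq_same, Finsupp.single_eq_of_ne' (Ne.symm h1)]

lemma trF_Eij (j i : ι) : trF F (Eij F j i) = Finsupp.single j (1 : F) i := by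
  unfold trF
  rw [finsum_eq_single _ i]
  · rw [Eij_apply_single, Finsupp.single_eq_same]
  · intro l hl
    rw [Eij_apply_single, Finsupp.single_eq_of_ne' hl]
    simp

lemma trF_mul_Eij (f : Module.End F (ι →₀ F)) (j i : ι) :
    trF F (f * Eij F j i) = f (Finsupp.single j 1) i := by
  unfold trF
  rw [finsum_eq_single _ i]
  · rw [Module.End.mul_apply, Eij_apply_single, Finsupp.single_eq_same]
  · intro l hl
    rw [Module.End.mul_apply, Eij_apply_single, Finsupp.single_eq_of_ne' hl]
    simp

lemma trF_invariance {f g h : Module.End F (ι →₀ F)} (hf : Finitary F f)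
    (hg : Finitary F g) (hh : Finitary F h) :
    trF F ((h * f - f * h) * g) + trF F (f * (h * g - g * h)) = 0 := by
  have e1 : (h * f - f * h) * g = h * f * g - f * h * g := sub_mul (h * f) (f * h) g
  have e2 : f * (h * g - g * h) = f * (h * g) - f * (g * h) := mul_sub f (h * g) (g * h)
  rw [e1, e2, trF_sub ((hh.mul hf).mul hg) ((hf.mul hh).mul hg),
    trF_sub (hf.mul (hh.mul hg)) (hf.mul (hg.mul hh))]
  have e3 : trF F (h * f * g) = trF F (f * (g * h)) := by
    rw [trF_mul_comm (hh.mul hf) hg]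
    have e5 : g * (h * f) = (g * h) * f := (mul_assoc g h f).symm
    rw [e5, trF_mul_comm (hg.mul hh) hf]
  have e4 : f * h * g = f * (h * g) := mul_assoc f h g
  rw [e3, ← e4]
  ring

lemma trF_mul_sub_Eij {f : Module.End F (ι →₀ F)} (hf : Finitary F f) (j k : ι) :
    trF F (f * (Eij F j j - Eij F k k)) =
      f (Finsupp.single j 1) j - f (Finsupp.single k 1) k := by
  have e : f * (Eij F j j - Eij F k k) = f * Eij F j j - f * Eij F k k :=
    mul_sub f (Eij F j j) (Eij F k k)
  rw [e, trF_sub (hf.mul (finitary_Eij j j)) (hf.mul (finitary_Eij k k)),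
    trF_mul_Eij, trF_mul_Eij]

end Aux

/-- The trace form `κ (f, g) = tr (f ∘ g)` on `sl_J(F)` (with `J` infinite) is a
symmetric bilinear form which is invariant and nondegenerate; moreover `f ∘ g` is
finitary whenever `f` and `g` are. -/
theorem traceForm_slJ_symm_invariant_nondegenerate (F : Type*) [Field F]
    (J : Type*) [Infinite J] :
    (∀ f g : slJ F J, Finitary F ((f : Module.End F (J →₀ F)) * (g : Module.End F (J →₀ F)))) ∧
    (∀ f g : slJ F J, kappa F J f g = kappa F J g f) ∧
    (∀ f f' g : slJ F J, kappa F J (f + f') g = kappa F J f g + kappa F J f' g) ∧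
    (∀ (c : F) (f g : slJ F J), kappa F J (c • f) g = c * kappa F J f g) ∧
    (∀ f g g' : slJ F J, kappa F J f (g + g') = kappa F J f g + kappa F J f g') ∧
    (∀ (c : F) (f g : slJ F J), kappa F J f (c • g) = c * kappa F J f g) ∧
    (∀ f g h : slJ F J, kappa F J ⁅h, f⁆ g + kappa F J f ⁅h, g⁆ = 0) ∧
    (∀ f : slJ F J, (∀ g : slJ F J, kappa F J f g = 0) → f = 0) := by
  classical
  have hfin : ∀ f g : slJ F J,
      Finitary F ((f : Module.End F (J →₀ F)) * (g : Module.End F (J →₀ F))) :=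
    fun f g => f.2.1.mul g.2.1
  refine ⟨hfin, ?_, ?_, ?_, ?_, ?_, ?_, ?_⟩
  · intro f g
    exact trF_mul_comm f.2.1 g.2.1
  · intro f f' g
    have h : ((f + f' : slJ F J) : Module.End F (J →₀ F)) = ↑f + ↑f' := rfl
    rw [kappa, h, add_mul]
    exact trF_add (hfin f g) (hfin f' g)
  · intro c f g
    have h : ((c • f : slJ F J) : Module.End F (J →₀ F)) = c • ↑f := rfl
    rw [kappa, h, smul_mul_assoc]
    exact trF_smul c _
  · intro f g g'
    have h : ((g + g' : slJ F J) : Module.End F (J →₀ F)) = ↑g + ↑g' := rfl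
    rw [kappa, h, mul_add]
    exact trF_add (hfin f g) (hfin f g')
  · intro c f g
    have h : ((c • g : slJ F J) : Module.End F (J →₀ F)) = c • ↑g := rfl
    rw [kappa, h, mul_smul_comm]
    exact trF_smul c _
  · intro f g h
    rw [kappa, kappa, LieSubalgebra.coe_bracket, LieSubalgebra.coe_bracket,
      Ring.lie_def, Ring.lie_def]
    exact trF_invariance f.2.1 g.2.1 h.2.1
  · intro f hf0
    have hoff : ∀ i j : J, i ≠ j → (f : Module.End F (J →₀ F)) (Finsupp.single j 1) i = 0 := by
      intro i j hij
      have hmem : Eij F j i ∈ slJ F J := by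
        refine ⟨finitary_Eij j i, ?_⟩
        rw [trF_Eij, Finsupp.single_eq_of_ne' (Ne.symm hij)]
      have := hf0 ⟨Eij F j i, hmem⟩
      rwa [kappa, trF_mul_Eij] at this
    have hdiag : ∀ j : J, (f : Module.End F (J →₀ F)) (Finsupp.single j 1) j = 0 := by
      intro j
      obtain ⟨k, hk⟩ :=
        (((f.2.1.image Prod.snd).union (Set.finite_singleton j)).infinite_compl).nonempty
      simp only [Set.mem_compl_iff, Set.mem_union, Set.mem_singleton_iff, not_or] at hk
      obtain ⟨hk1, hk2⟩ := hk
      have hfk : (f : Module.End F (J →₀ F)) (Finsupp.single k 1) k = 0 := by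
        by_contra hcon
        exact hk1 ⟨(k, k), hcon, rfl⟩
      have hmem : Eij F j j - Eij F k k ∈ slJ F J := by
        refine ⟨(finitary_Eij j j).sub (finitary_Eij k k), ?_⟩
        rw [trF_sub (finitary_Eij j j) (finitary_Eij k k), trF_Eij, trF_Eij]
        simp
      have := hf0 ⟨Eij F j j - Eij F k k, hmem⟩
      rw [kappa] at this
      rw [show ((⟨Eij F j j - Eij F k k, hmem⟩ : slJ F J) : Module.End F (J →₀ F))
          = Eij F j j - Eij F k k from rfl] at this
      rw [trF_mul_sub_Eij f.2.1, hfk, sub_zero] at this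
      exact this
    have hcol : ∀ j : J, (f : Module.End F (J →₀ F)) (Finsupp.single j 1) = 0 := by
      intro j
      refine column_eq_zero fun i => ?_
      rcases eq_or_ne i j with rfl | hne
      · exact hdiag i
      · exact hoff i j hne
    have : (f : Module.End F (J →₀ F)) = 0 := by
      refine LinearMap.ext fun v => ?_
      rw [end_apply_eq_sum]
      refine Finset.sum_eq_zero fun i _ => ?_
      rw [hcol i, smul_zero]
    exact Subtype.ext this
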